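/- If σ = Ψ(π) with Ψ as in the descent-to-weak-excedance bijection, then (21-3)π + (3-21)π - C(des(π),2) = A_EN(σ). -/

import Mathlib

open Finset


def wexB {n : ℕ} (π : Equiv.Perm (Fin n)) : Finset (Fin n) :=
  Finset.univ.filter (fun i => i ≤ π i)

def wex {n : ℕ} (π : Equiv.Perm (Fin n)) : ℕ := (wexB π).card

def wexbotsum {n : ℕ} (π : Equiv.Perm (Fin n)) : ℕ := ∑ i ∈ wexB π, (i.val + 1)

def wextopsum {n : ℕ} (π : Equiv.Perm (Fin n)) : ℕ := ∑ i ∈ wexB π, ((π i).val + 1)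

def wexbotsSet {n : ℕ} (π : Equiv.Perm (Fin n)) : Finset ℕ :=
  (wexB π).image (fun i => i.val + 1)

def wextopsSet {n : ℕ} (π : Equiv.Perm (Fin n)) : Finset ℕ :=
  (wexB π).image (fun i => (π i).val + 1)

/-- `A_EE`: pairs `(i,j)` with `j < i ≤ π i < π j`. -/
def AEE {n : ℕ} (π : Equiv.Perm (Fin n)) : ℕ :=
  (Finset.univ.filter (fun p : Fin n × Fin n =>
    p.2 < p.1 ∧ p.1 ≤ π p.1 ∧ π p.1 < π p.2)).card

/-- `A_NN`: pairs `(i,j)` with `π j < π i < i < j`. -/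
def ANN {n : ℕ} (π : Equiv.Perm (Fin n)) : ℕ :=
  (Finset.univ.filter (fun p : Fin n × Fin n =>
    π p.2 < π p.1 ∧ π p.1 < p.1 ∧ p.1 < p.2)).card

/-- `A_EN`: pairs `(i,j)` with `j ≤ π j < π i < i`. -/
def AEN {n : ℕ} (π : Equiv.Perm (Fin n)) : ℕ :=
  (Finset.univ.filter (fun p : Fin n × Fin n =>
    p.2 ≤ π p.2 ∧ π p.2 < π p.1 ∧ π p.1 < p.1)).card

/-- `A_NE`: pairs `(i,j)` with `π i < i < j ≤ π j`. -/
def ANE {n : ℕ} (π : Equiv.Perm (Fin n)) : ℕ :=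
  (Finset.univ.filter (fun p : Fin n × Fin n =>
    π p.1 < p.1 ∧ p.1 < p.2 ∧ p.2 ≤ π p.2)).card

/-- `C_EE`: pairs `(i,j)` with `j < i ≤ π j < π i`. -/
def CEE {n : ℕ} (π : Equiv.Perm (Fin n)) : ℕ :=
  (Finset.univ.filter (fun p : Fin n × Fin n =>
    p.2 < p.1 ∧ p.1 ≤ π p.2 ∧ π p.2 < π p.1)).card

/-- `C_NN`: pairs `(i,j)` with `π i < π j < i < j`. -/
def CNN {n : ℕ} (π : Equiv.Perm (Fin n)) : ℕ :=
  (Finset.univ.filter (fun p : Fin n × Fin n =>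
    π p.1 < π p.2 ∧ π p.2 < p.1 ∧ p.1 < p.2)).card

def descents {n : ℕ} (π : Equiv.Perm (Fin n)) : Finset (Fin n) :=
  Finset.univ.filter (fun i => ∃ h : i.val + 1 < n, π ⟨i.val + 1, h⟩ < π i)

def des {n : ℕ} (π : Equiv.Perm (Fin n)) : ℕ := (descents π).card

def destopsum {n : ℕ} (π : Equiv.Perm (Fin n)) : ℕ :=
  ∑ i ∈ descents π, ((π i).val + 1)

def desbotsum {n : ℕ} (π : Equiv.Perm (Fin n)) : ℕ :=
  ∑ i ∈ descents π, (if h : i.val + 1 < n then (π ⟨i.val + 1, h⟩).val + 1 else 0)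

def destopsSet {n : ℕ} (π : Equiv.Perm (Fin n)) : Finset ℕ :=
  (descents π).image (fun i => (π i).val + 1)

def desbotsSet {n : ℕ} (π : Equiv.Perm (Fin n)) : Finset ℕ :=
  (descents π).image
    (fun i => if h : i.val + 1 < n then (π ⟨i.val + 1, h⟩).val + 1 else 0)

def maj {n : ℕ} (π : Equiv.Perm (Fin n)) : ℕ := ∑ i ∈ descents π, (i.val + 1)

/-- Occurrences of the generalized pattern `(2-31)`. -/
def P2d31 {n : ℕ} (π : Equiv.Perm (Fin n)) : ℕ :=
  (Finset.univ.filter (fun p : Fin n × Fin n =>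
    p.1 < p.2 ∧ ∃ h : p.2.val + 1 < n,
      π ⟨p.2.val + 1, h⟩ < π p.1 ∧ π p.1 < π p.2)).card

/-- Occurrences of the generalized pattern `(31-2)`. -/
def P31d2 {n : ℕ} (π : Equiv.Perm (Fin n)) : ℕ :=
  (Finset.univ.filter (fun p : Fin n × Fin n =>
    ∃ h : p.1.val + 1 < n, π ⟨p.1.val + 1, h⟩ < π p.1 ∧ p.1.val + 1 < p.2.val ∧
      π ⟨p.1.val + 1, h⟩ < π p.2 ∧ π p.2 < π p.1)).card

/-- Occurrences of the generalized pattern `(21-3)`. -/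
def P21d3 {n : ℕ} (π : Equiv.Perm (Fin n)) : ℕ :=
  (Finset.univ.filter (fun p : Fin n × Fin n =>
    ∃ h : p.1.val + 1 < n, π ⟨p.1.val + 1, h⟩ < π p.1 ∧ p.1.val + 1 < p.2.val ∧
      π p.1 < π p.2)).card

/-- Occurrences of the generalized pattern `(3-21)`. -/
def P3d21 {n : ℕ} (π : Equiv.Perm (Fin n)) : ℕ :=
  (Finset.univ.filter (fun p : Fin n × Fin n =>
    p.1 < p.2 ∧ ∃ h : p.2.val + 1 < n,
      π ⟨p.2.val + 1, h⟩ < π p.2 ∧ π p.2 < π p.1)).card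

/-- Occurrences of the generalized pattern `(1-32)`. -/
def P1d32 {n : ℕ} (π : Equiv.Perm (Fin n)) : ℕ :=
  (Finset.univ.filter (fun p : Fin n × Fin n =>
    p.1 < p.2 ∧ ∃ h : p.2.val + 1 < n,
      π ⟨p.2.val + 1, h⟩ < π p.2 ∧ π p.1 < π ⟨p.2.val + 1, h⟩)).card

/-- Occurrences of the generalized pattern `(32-1)`. -/
def P32d1 {n : ℕ} (π : Equiv.Perm (Fin n)) : ℕ :=
  (Finset.univ.filter (fun p : Fin n × Fin n =>
    ∃ h : p.1.val + 1 < n, π ⟨p.1.val + 1, h⟩ < π p.1 ∧ p.1.val + 1 < p.2.val ∧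
      π p.2 < π ⟨p.1.val + 1, h⟩)).card


/-- A permutation tableau with `n-k` columns, encoded as a `{0,1,2}`-filling of the full
`k × m` rectangle: the `2`'s are the boxes outside the Young diagram (southeast corner). -/
def IsPermTableau {k m : ℕ} (T : Fin k → Fin m → Fin 3) : Prop :=
  (∀ j : Fin m, ∃ i : Fin k, T i j = 1) ∧
  (∀ (i : Fin k) (j : Fin m), T i j ≠ 2 →
    ∀ (i' : Fin k) (j' : Fin m), i' ≤ i → j' ≤ j → T i' j' ≠ 2) ∧
  (∀ (i : Fin k) (j : Fin m), T i j = 0 →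
    ¬ ((∃ i' < i, T i' j = 1) ∧ (∃ j' < j, T i j' = 1)))

def rowLen {k m : ℕ} (T : Fin k → Fin m → Fin 3) (i : Fin k) : ℕ :=
  (Finset.univ.filter (fun j => T i j ≠ 2)).card

def zerosT {k m : ℕ} (T : Fin k → Fin m → Fin 3) : ℕ :=
  ∑ i, (Finset.univ.filter (fun j => T i j = 0)).card

def onesT {k m : ℕ} (T : Fin k → Fin m → Fin 3) : ℕ :=
  ∑ i, (Finset.univ.filter (fun j => T i j = 1)).card

def twosT {k m : ℕ} (T : Fin k → Fin m → Fin 3) : ℕ :=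
  ∑ i, (Finset.univ.filter (fun j => T i j = 2)).card

/-- A valid `0/1`-filling of the Young diagram with row lengths `lam`. -/
def ValidFilling {k : ℕ} (lam : Fin k → ℕ) (F : ∀ i : Fin k, Fin (lam i) → Bool) : Prop :=
  (∀ (i : Fin k) (j : Fin (lam i)), ∃ (i' : Fin k) (h : (j : ℕ) < lam i'), F i' ⟨j, h⟩ = true) ∧
  (∀ (i : Fin k) (j : Fin (lam i)), F i j = false →
    ¬ ((∃ (i' : Fin k) (h : (j : ℕ) < lam i'), i' < i ∧ F i' ⟨j, h⟩ = true) ∧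
       (∃ j' : Fin (lam i), j' < j ∧ F i j' = true)))

def fillZeros {k : ℕ} {lam : Fin k → ℕ} (F : ∀ i : Fin k, Fin (lam i) → Bool) : ℕ :=
  ∑ i, (Finset.univ.filter (fun j => F i j = false)).card

def fillOnes {k : ℕ} {lam : Fin k → ℕ} (F : ∀ i : Fin k, Fin (lam i) → Bool) : ℕ :=
  ∑ i, (Finset.univ.filter (fun j => F i j = true)).card

open Classical in
/-- `F_λ(p,q)`, evaluated at integers `p`, `q`: the sum over valid fillings of
`p ^ (#0's) * q ^ (#1's)`. -/
noncomputable def Fval {k : ℕ} (lam : Fin k → ℕ) (p q : ℤ) : ℤ :=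
  ∑ F ∈ Finset.univ.filter
      (fun F : ∀ i : Fin k, Fin (lam i) → Bool => ValidFilling lam F),
    p ^ fillZeros F * q ^ fillOnes F


set_option maxRecDepth 4000

private lemma cardProdFst {n : ℕ} (P : Fin n × Fin n → Prop) [DecidablePred P] :
    ((univ : Finset (Fin n × Fin n)).filter P).card
      = ∑ i, (univ.filter fun j => P (i, j)).card := by
  rw [Finset.card_filter, ← Finset.univ_product_univ, Finset.sum_product]
  exact Finset.sum_congr rfl fun i _ => (Finset.card_filter _ _).symm

private lemma cardProdSnd {n : ℕ} (P : Fin n × Fin n → Prop) [DecidablePred P] :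
    ((univ : Finset (Fin n × Fin n)).filter P).card
      = ∑ j, (univ.filter fun i => P (i, j)).card := by
  rw [Finset.card_filter, ← Finset.univ_product_univ, Finset.sum_product_right]
  exact Finset.sum_congr rfl fun j _ => (Finset.card_filter _ _).symm

private lemma sumFilterLt (S : Finset ℕ) :
    ∑ t ∈ S, (S.filter (t < ·)).card = S.card.choose 2 := by
  induction S using Finset.induction_on_max with
  | empty => simp
  | insert b S hb ih =>
    have hbS : b ∉ S := fun h => lt_irrefl b (hb b h)
    rw [Finset.sum_insert hbS]
    have h1 : (insert b S).filter (b < ·) = ∅ := by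
      apply Finset.filter_eq_empty_iff.mpr
      intro x hx
      rcases Finset.mem_insert.mp hx with rfl | hx
      · exact lt_irrefl x
      · exact not_lt_of_gt (hb x hx)
    have h2 : ∀ t ∈ S, ((insert b S).filter (t < ·)).card
        = (S.filter (t < ·)).card + 1 := by
      intro t ht
      rw [Finset.filter_insert, if_pos (hb t ht),
        Finset.card_insert_of_notMem (fun h => hbS (Finset.mem_filter.mp h).1)]
    rw [h1, Finset.sum_congr rfl h2, Finset.sum_add_distrib, ih]
    simp [Finset.card_insert_of_notMem hbS, Nat.choose_succ_succ]
    omega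

private lemma cardPermFilter {n : ℕ} (π : Equiv.Perm (Fin n)) (p : Fin n → Prop)
    [DecidablePred p] :
    (univ.filter fun j => p (π j)).card = (univ.filter p).card := by
  apply Finset.card_bij (fun j _ => π j)
  · intro a ha; simp_all
  · intro a _ b _ h; exact π.injective h
  · intro b hb; exact ⟨π.symm b, by simp_all, by simp⟩

private lemma cardGtFin {n : ℕ} (a : Fin n) :
    (univ.filter fun v : Fin n => a < v).card = (Finset.Icc (a.val + 1) (n - 1)).card := by
  apply Finset.card_bij (fun v _ => v.val)
  · intro v hv
    simp only [Finset.mem_filter, Finset.mem_univ, true_and, Fin.lt_def] at hv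
    have := v.isLt
    simp only [Finset.mem_Icc]
    omega
  · intro v _ w _ h; exact Fin.ext h
  · intro m hm
    simp only [Finset.mem_Icc] at hm
    have hmn : m < n := by have := a.isLt; omega
    refine ⟨⟨m, hmn⟩, ?_, rfl⟩
    simp only [Finset.mem_filter, Finset.mem_univ, true_and, Fin.lt_def]
    omega

theorem patterns_eq_AEN (n : ℕ) (hn : 1 ≤ n) (π σ : Equiv.Perm (Fin n))
    (h1 : wexbotsSet σ = insert 1 ((desbotsSet π).image (· + 1)))
    (h2 : wextopsSet σ = insert n ((destopsSet π).image (· - 1))) :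
    (P21d3 π : ℤ) + (P3d21 π : ℤ) - ((des π).choose 2 : ℤ) = (AEN σ : ℤ) := by
  set S' : Finset ℕ := (destopsSet π).image (· - 1) with hS'
  -- basic facts about destopsSet
  have hdestop : ∀ t ∈ destopsSet π, 2 ≤ t ∧ t ≤ n := by
    intro t ht
    rw [destopsSet, Finset.mem_image] at ht
    obtain ⟨i, hi, rfl⟩ := ht
    rw [descents, Finset.mem_filter] at hi
    obtain ⟨-, h, hlt⟩ := hi
    rw [Fin.lt_def] at hlt
    have := (π i).isLt
    omega
  have hS'mem : ∀ s ∈ S', 1 ≤ s ∧ s ≤ n - 1 := by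
    intro s hs
    rw [hS', Finset.mem_image] at hs
    obtain ⟨t, ht, rfl⟩ := hs
    have := hdestop t ht
    omega
  -- card S' = des π
  have hcardS' : S'.card = des π := by
    rw [hS', Finset.card_image_of_injOn, destopsSet, Finset.card_image_of_injOn, des]
    · intro a ha b hb h
      have h' : (π a).val + 1 = (π b).val + 1 := h
      exact π.injective (Fin.ext (by omega))
    · intro a ha b hb h
      have h' : a - 1 = b - 1 := h
      have := hdestop a ha; have := hdestop b hb
      omega
  -- Step 1: AEN σ as a card over value pairs
  have hAEN : AEN σ
      = (((insert n S') ×ˢ ((Finset.Icc 1 n) \ (insert n S'))).filter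
          fun p => p.1 < p.2).card := by
    rw [AEN]
    apply Finset.card_bij (fun p _ => ((σ p.2).val + 1, (σ p.1).val + 1))
    · rintro ⟨i, j⟩ hp
      simp only [Finset.mem_filter, Finset.mem_univ, true_and] at hp
      obtain ⟨hj, hji, hii⟩ := hp
      simp only [Finset.mem_filter, Finset.mem_product, Finset.mem_sdiff, Finset.mem_Icc]
      refine ⟨⟨?_, ⟨by omega, by have := (σ i).isLt; omega⟩, ?_⟩, ?_⟩
      · rw [← h2, wextopsSet]
        refine Finset.mem_image.mpr ⟨j, ?_, rfl⟩
        rw [wexB, Finset.mem_filter]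
        exact ⟨Finset.mem_univ _, hj⟩
      · rw [← h2, wextopsSet]
        intro hmem
        obtain ⟨k, hk, hke⟩ := Finset.mem_image.mp hmem
        have hke' : (σ k).val + 1 = (σ i).val + 1 := hke
        rw [wexB, Finset.mem_filter] at hk
        have hki : k = i := σ.injective (Fin.ext (by omega))
        subst hki
        have hle : k.val ≤ (σ k).val := hk.2
        rw [Fin.lt_def] at hii
        omega
      · rw [Fin.lt_def] at hji; omega
    · rintro ⟨i, j⟩ _ ⟨i', j'⟩ _ h
      simp only [Prod.mk.injEq] at h
      have hj : σ j = σ j' := Fin.ext (by omega)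
      have hi : σ i = σ i' := Fin.ext (by omega)
      exact Prod.ext (σ.injective hi) (σ.injective hj)
    · rintro ⟨t, v⟩ hm
      simp only [Finset.mem_filter, Finset.mem_product, Finset.mem_sdiff,
        Finset.mem_Icc] at hm
      obtain ⟨⟨htW, ⟨hv1, hvn⟩, hvW⟩, htv⟩ := hm
      rw [← h2, wextopsSet] at htW
      obtain ⟨k, hk, hke⟩ := Finset.mem_image.mp htW
      have hke' : (σ k).val + 1 = t := hke
      rw [wexB, Finset.mem_filter] at hk
      have hv' : v - 1 < n := by omega
      have hσi : σ (σ.symm ⟨v - 1, hv'⟩) = ⟨v - 1, hv'⟩ := σ.apply_symm_apply _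
      set i := σ.symm ⟨v - 1, hv'⟩ with hidef
      have hnonexc : σ i < i := by
        by_contra hcon
        push_neg at hcon
        apply hvW
        rw [← h2, wextopsSet]
        refine Finset.mem_image.mpr ⟨i, ?_, ?_⟩
        · rw [wexB, Finset.mem_filter]
          exact ⟨Finset.mem_univ _, hcon⟩
        · show (σ i).val + 1 = v
          rw [hσi]
          show v - 1 + 1 = v
          omega
      refine ⟨(i, k), ?_, ?_⟩
      · simp only [Finset.mem_filter, Finset.mem_univ, true_and]
        refine ⟨hk.2, ?_, hnonexc⟩
        rw [Fin.lt_def, hσi]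
        show (σ k).val < v - 1
        omega
      · show ((σ k).val + 1, (σ i).val + 1) = (t, v)
        rw [hσi]
        refine Prod.ext hke' ?_
        show v - 1 + 1 = v
        omega
  -- Step 2: expand card over product as a sum
  have hprod : (((insert n S') ×ˢ ((Finset.Icc 1 n) \ (insert n S'))).filter
          fun p => p.1 < p.2).card
      = ∑ t ∈ insert n S', (((Finset.Icc 1 n) \ (insert n S')).filter (t < ·)).card := by
    rw [Finset.card_filter, Finset.sum_product]
    exact Finset.sum_congr rfl fun t _ => (Finset.card_filter _ _).symm
  -- top element n contributes nothing
  have hnS' : n ∉ S' := fun h => by have := hS'mem n h; omega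
  have htop : (((Finset.Icc 1 n) \ (insert n S')).filter (n < ·)).card = 0 := by
    rw [Finset.card_eq_zero]
    apply Finset.filter_eq_empty_iff.mpr
    intro x hx
    rw [Finset.mem_sdiff, Finset.mem_Icc] at hx
    omega
  -- per t ∈ S'
  have hper : ∀ t ∈ S', ((Finset.Icc 1 n) \ (insert n S')).filter (t < ·)
      = (Finset.Icc (t + 1) (n - 1)).filter (· ∉ S') := by
    intro t ht
    have h1t := hS'mem t ht
    ext v
    simp only [Finset.mem_filter, Finset.mem_sdiff, Finset.mem_Icc,
      Finset.mem_insert, not_or]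
    constructor
    · rintro ⟨⟨⟨hv1, hvn⟩, hvne, hvS⟩, htv⟩
      exact ⟨⟨by omega, by omega⟩, hvS⟩
    · rintro ⟨⟨hv1, hvn⟩, hvS⟩
      exact ⟨⟨⟨by omega, by omega⟩, by omega, hvS⟩, by omega⟩
  have hcomp : ∀ t ∈ S', ((Finset.Icc (t + 1) (n - 1)).filter (· ∉ S')).card
      + (S'.filter (t < ·)).card = (Finset.Icc (t + 1) (n - 1)).card := by
    intro t ht
    have hST : S'.filter (t < ·) = (Finset.Icc (t + 1) (n - 1)).filter (· ∈ S') := by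
      ext s
      simp only [Finset.mem_filter, Finset.mem_Icc]
      constructor
      · rintro ⟨hs, hts⟩
        have := hS'mem s hs
        exact ⟨⟨by omega, by omega⟩, hs⟩
      · rintro ⟨⟨hs1, hs2⟩, hs⟩
        exact ⟨hs, by omega⟩
    rw [hST, Nat.add_comm, Finset.card_filter_add_card_filter_not]
  -- the AEN + choose identity
  have hAENsum : AEN σ + (des π).choose 2
      = ∑ t ∈ S', (Finset.Icc (t + 1) (n - 1)).card := by
    rw [hAEN, hprod, Finset.sum_insert hnS', htop, Nat.zero_add]
    rw [Finset.sum_congr rfl (fun t ht => by rw [hper t ht]), ← hcardS', ← sumFilterLt S',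
      ← Finset.sum_add_distrib]
    exact Finset.sum_congr rfl hcomp
  -- Step 3: LHS patterns as sums over descents
  have hP1 : P21d3 π = ∑ d ∈ descents π,
      (univ.filter fun j : Fin n => d.val + 1 < j.val ∧ π d < π j).card := by
    rw [P21d3, cardProdFst, descents, Finset.sum_filter]
    apply Finset.sum_congr rfl
    intro i _
    by_cases hd : ∃ h : i.val + 1 < n, π ⟨i.val + 1, h⟩ < π i
    · rw [if_pos hd]
      congr 1
      ext j
      simp only [Finset.mem_filter, Finset.mem_univ, true_and]
      obtain ⟨h, hlt⟩ := hd
      constructor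
      · rintro ⟨h', -, hj, hij⟩; exact ⟨hj, hij⟩
      · rintro ⟨hj, hij⟩; exact ⟨h, hlt, hj, hij⟩
    · rw [if_neg hd, Finset.card_eq_zero]
      apply Finset.filter_eq_empty_iff.mpr
      intro j _
      rintro ⟨h, hlt, -, -⟩
      exact hd ⟨h, hlt⟩
  have hP2 : P3d21 π = ∑ d ∈ descents π,
      (univ.filter fun i : Fin n => i < d ∧ π d < π i).card := by
    rw [P3d21, cardProdSnd, descents, Finset.sum_filter]
    apply Finset.sum_congr rfl
    intro j _
    by_cases hd : ∃ h : j.val + 1 < n, π ⟨j.val + 1, h⟩ < π j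
    · rw [if_pos hd]
      congr 1
      ext i
      simp only [Finset.mem_filter, Finset.mem_univ, true_and]
      obtain ⟨h, hlt⟩ := hd
      constructor
      · rintro ⟨hij, h', -, hji⟩; exact ⟨hij, hji⟩
      · rintro ⟨hij, hji⟩; exact ⟨hij, h, hlt, hji⟩
    · rw [if_neg hd, Finset.card_eq_zero]
      apply Finset.filter_eq_empty_iff.mpr
      intro i _
      rintro ⟨-, h, hlt, -⟩
      exact hd ⟨h, hlt⟩
  -- merge the two counts for each descent
  have hmerge : ∀ d ∈ descents π,
      (univ.filter fun j : Fin n => d.val + 1 < j.val ∧ π d < π j).card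
      + (univ.filter fun i : Fin n => i < d ∧ π d < π i).card
      = (univ.filter fun x : Fin n => π d < π x).card := by
    intro d hd
    rw [descents, Finset.mem_filter] at hd
    obtain ⟨-, h, hlt⟩ := hd
    have hlt' : (π ⟨d.val + 1, h⟩).val < (π d).val := hlt
    rw [Finset.card_filter, Finset.card_filter, Finset.card_filter,
      ← Finset.sum_add_distrib]
    apply Finset.sum_congr rfl
    intro x _
    by_cases e1 : x = d
    · subst e1
      simp only [Fin.lt_def]
      split_ifs <;> omega
    · by_cases e2 : x = ⟨d.val + 1, h⟩
      · subst e2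
        have hx : ((⟨d.val + 1, h⟩ : Fin n)).val = d.val + 1 := rfl
        simp only [Fin.lt_def, hx]
        split_ifs <;> omega
      · have hx1 : x.val ≠ d.val := fun e => e1 (Fin.ext e)
        have hx2 : x.val ≠ d.val + 1 := fun e => e2 (Fin.ext e)
        simp only [Fin.lt_def]
        split_ifs <;> omega
  -- count of values above a descent top
  have hcount : ∀ d ∈ descents π, (univ.filter fun x : Fin n => π d < π x).card
      = (Finset.Icc ((π d).val + 1) (n - 1)).card := by
    intro d _
    rw [cardPermFilter π (fun v => π d < v), cardGtFin]
  -- reindex the sum over S' to descents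
  have hreindex : ∑ t ∈ S', (Finset.Icc (t + 1) (n - 1)).card
      = ∑ d ∈ descents π, (Finset.Icc ((π d).val + 1) (n - 1)).card := by
    rw [hS', destopsSet, Finset.image_image, Finset.sum_image]
    · apply Finset.sum_congr rfl
      intro d _
      have hv : ((fun x => x - 1) ∘ fun i : Fin n => (π i).val + 1) d = (π d).val := by
        simp
      rw [hv]
    · intro a ha b hb hab
      simp only [Function.comp] at hab
      exact π.injective (Fin.ext (by omega))
  -- combine everything
  have key : P21d3 π + P3d21 π = AEN σ + (des π).choose 2 := by
    rw [hP1, hP2, ← Finset.sum_add_distrib, Finset.sum_congr rfl hmerge,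
      Finset.sum_congr rfl hcount, hAENsum, hreindex]
  have hcast := congrArg (fun m : ℕ => (m : ℤ)) key
  push_cast at hcast
  linarith
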